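/- The chain of adjunctions comp₁ ⊣ m ⊣ comp₂ ⊣ m̄ ⊣ comp₁ holds between the mixed category mC and C, where m(X) = (X,X,F_X,id_X), m̄(X) = (X,X,id_X,F_X), and comp_i are the component functors. -/

import Mathlib

open CategoryTheory CategoryTheory.Limits

universe v u

variable {C : Type u} [Category.{v} C]

/-- The twisted category `tC` attached to a category `C` with an endomorphism `F` of the
identity functor: objects are pairs `(X, Φ)` with `Φ ≫ Φ = F.app X`. -/
structure Twisted (C : Type u) [Category.{v} C] (F : 𝟭 C ⟶ 𝟭 C) where
  X : C
  tw : X ⟶ X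
  tw_tw : tw ≫ tw = F.app X

namespace Twisted

variable {F : 𝟭 C ⟶ 𝟭 C}

instance : Category (Twisted C F) where
  Hom A B := { f : A.X ⟶ B.X // A.tw ≫ f = f ≫ B.tw }
  id A := ⟨𝟙 A.X, by simp⟩
  comp {A B D} f g := ⟨f.1 ≫ g.1, by
    rw [← Category.assoc, f.2, Category.assoc, g.2, ← Category.assoc]⟩
  id_comp f := Subtype.ext (Category.id_comp _)
  comp_id f := Subtype.ext (Category.comp_id _)
  assoc f g h := Subtype.ext (Category.assoc _ _ _)

end Twisted

/-- The mixed category `mC`: objects are quadruples `(X₁, X₂, φ₁, φ₂)` with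
`φ₁ ≫ φ₂ = F.app X₁` and `φ₂ ≫ φ₁ = F.app X₂`. -/
structure Mixed (C : Type u) [Category.{v} C] (F : 𝟭 C ⟶ 𝟭 C) where
  X₁ : C
  X₂ : C
  φ₁ : X₁ ⟶ X₂
  φ₂ : X₂ ⟶ X₁
  h₁ : φ₁ ≫ φ₂ = F.app X₁
  h₂ : φ₂ ≫ φ₁ = F.app X₂

namespace Mixed

variable {F : 𝟭 C ⟶ 𝟭 C}

instance : Category (Mixed C F) where
  Hom A B := { p : (A.X₁ ⟶ B.X₁) × (A.X₂ ⟶ B.X₂) //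
      A.φ₁ ≫ p.2 = p.1 ≫ B.φ₁ ∧ A.φ₂ ≫ p.1 = p.2 ≫ B.φ₂ }
  id A := ⟨(𝟙 _, 𝟙 _), by simp⟩
  comp {A B D} f g := ⟨(f.1.1 ≫ g.1.1, f.1.2 ≫ g.1.2), by
    constructor
    · rw [← Category.assoc, f.2.1, Category.assoc, g.2.1, ← Category.assoc]
    · rw [← Category.assoc, f.2.2, Category.assoc, g.2.2, ← Category.assoc]⟩
  id_comp f := Subtype.ext (Prod.ext_iff.mpr ⟨Category.id_comp _, Category.id_comp _⟩)
  comp_id f := Subtype.ext (Prod.ext_iff.mpr ⟨Category.comp_id _, Category.comp_id _⟩)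
  assoc f g h := Subtype.ext (Prod.ext_iff.mpr ⟨Category.assoc _ _ _, Category.assoc _ _ _⟩)

end Mixed

/-- The first component functor `comp₁ : mC ⥤ C`. -/
def comp₁ (F : 𝟭 C ⟶ 𝟭 C) : Mixed C F ⥤ C where
  obj A := A.X₁
  map f := f.1.1
  map_id _ := rfl
  map_comp _ _ := rfl

/-- The second component functor `comp₂ : mC ⥤ C`. -/
def comp₂ (F : 𝟭 C ⟶ 𝟭 C) : Mixed C F ⥤ C where
  obj A := A.X₂
  map f := f.1.2
  map_id _ := rfl
  map_comp _ _ := rfl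

/-- The mixing functor `m : C ⥤ mC`, `X ↦ (X, X, F_X, id_X)`. -/
def mixM (F : 𝟭 C ⟶ 𝟭 C) : C ⥤ Mixed C F where
  obj X := ⟨X, X, F.app X, 𝟙 X, by simp, by simp⟩
  map {X Y} f := ⟨(f, f), by
    constructor
    · simpa using (F.naturality f).symm
    · simp⟩
  map_id _ := rfl
  map_comp _ _ := rfl

/-- The anti-mixing functor `m̄ : C ⥤ mC`, `X ↦ (X, X, id_X, F_X)`. -/
def mixMbar (F : 𝟭 C ⟶ 𝟭 C) : C ⥤ Mixed C F where
  obj X := ⟨X, X, 𝟙 X, F.app X, by simp, by simp⟩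
  map {X Y} f := ⟨(f, f), by
    constructor
    · simp
    · simpa using (F.naturality f).symm⟩
  map_id _ := rfl
  map_comp _ _ := rfl

/-- The twisting functor `τ* : mC ⥤ mC`, swapping the two halves of a mixed object. -/
def tau (F : 𝟭 C ⟶ 𝟭 C) : Mixed C F ⥤ Mixed C F where
  obj A := ⟨A.X₂, A.X₁, A.φ₂, A.φ₁, A.h₂, A.h₁⟩
  map f := ⟨(f.1.2, f.1.1), ⟨f.2.2, f.2.1⟩⟩
  map_id _ := rfl
  map_comp _ _ := rfl

/-- The twixing functor `δ* : tC ⥤ mC`, `(X, Φ) ↦ (X, X, Φ, Φ)`. -/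
def deltaStar (F : 𝟭 C ⟶ 𝟭 C) : Twisted C F ⥤ Mixed C F where
  obj A := ⟨A.X, A.X, A.tw, A.tw, A.tw_tw, A.tw_tw⟩
  map f := ⟨(f.1, f.1), ⟨f.2, f.2⟩⟩
  map_id _ := rfl
  map_comp _ _ := rfl

/-- The chain of adjunctions `comp₁ ⊣ m ⊣ comp₂ ⊣ m̄ ⊣ comp₁` between the
mixed category `mC` and `C`. -/
theorem adjunction_chain {C : Type u} [Category.{v} C] (F : 𝟭 C ⟶ 𝟭 C) :
    Nonempty (comp₁ F ⊣ mixM F) ∧ Nonempty (mixM F ⊣ comp₂ F) ∧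
      Nonempty (comp₂ F ⊣ mixMbar F) ∧ Nonempty (mixMbar F ⊣ comp₁ F) := by
  refine ⟨⟨Adjunction.mkOfHomEquiv ?_⟩, ⟨Adjunction.mkOfHomEquiv ?_⟩,
    ⟨Adjunction.mkOfHomEquiv ?_⟩, ⟨Adjunction.mkOfHomEquiv ?_⟩⟩
  · exact
      { homEquiv := fun A Y =>
        { toFun := fun f => ⟨(f, A.φ₂ ≫ f), by
            refine ⟨?_, by simp [mixM]⟩
            show A.φ₁ ≫ A.φ₂ ≫ f = f ≫ F.app Y
            erw [← Category.assoc, A.h₁]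
            exact (F.naturality f).symm⟩
          invFun := fun g => g.1.1
          left_inv := fun f => rfl
          right_inv := fun g => by
            apply Subtype.ext
            have h := g.2.2
            simp only [mixM, Category.comp_id] at h
            exact Prod.ext rfl h }
        homEquiv_naturality_left_symm := fun f g => rfl
        homEquiv_naturality_right := fun f g => by
          apply Subtype.ext
          exact Prod.ext rfl (Category.assoc _ _ _).symm }
  · exact
      { homEquiv := fun X B =>
        { toFun := fun g => g.1.2
          invFun := fun g => ⟨(g ≫ B.φ₂, g), by
            refine ⟨?_, by simp [mixM]; rfl⟩
            show F.app X ≫ g = (g ≫ B.φ₂) ≫ B.φ₁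
            erw [Category.assoc, B.h₂]
            exact (F.naturality g).symm⟩
          left_inv := fun g => by
            apply Subtype.ext
            have h := g.2.2
            simp only [mixM, Category.id_comp] at h
            exact Prod.ext h.symm rfl
          right_inv := fun g => rfl }
        homEquiv_naturality_left_symm := fun f g => by
          apply Subtype.ext
          exact Prod.ext (Category.assoc _ _ _) rfl
        homEquiv_naturality_right := fun f g => rfl }
  · exact
      { homEquiv := fun A Y =>
        { toFun := fun f => ⟨(A.φ₁ ≫ f, f), by
            refine ⟨by simp [mixMbar], ?_⟩
            show A.φ₂ ≫ A.φ₁ ≫ f = f ≫ F.app Y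
            erw [← Category.assoc, A.h₂]
            exact (F.naturality f).symm⟩
          invFun := fun g => g.1.2
          left_inv := fun f => rfl
          right_inv := fun g => by
            apply Subtype.ext
            have h := g.2.1
            simp only [mixMbar, Category.comp_id] at h
            exact Prod.ext h rfl }
        homEquiv_naturality_left_symm := fun f g => rfl
        homEquiv_naturality_right := fun f g => by
          apply Subtype.ext
          exact Prod.ext (Category.assoc _ _ _).symm rfl }
  · exact
      { homEquiv := fun X B =>
        { toFun := fun g => g.1.1
          invFun := fun g => ⟨(g, g ≫ B.φ₁), by
            refine ⟨by simp [mixMbar]; rfl, ?_⟩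
            show F.app X ≫ g = (g ≫ B.φ₁) ≫ B.φ₂
            erw [Category.assoc, B.h₁]
            exact (F.naturality g).symm⟩
          left_inv := fun g => by
            apply Subtype.ext
            have h := g.2.1
            simp only [mixMbar, Category.id_comp] at h
            exact Prod.ext rfl h.symm
          right_inv := fun g => rfl }
        homEquiv_naturality_left_symm := fun f g => by
          apply Subtype.ext
          exact Prod.ext rfl (Category.assoc _ _ _)
        homEquiv_naturality_right := fun f g => rfl }
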